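/- Let l > 0, α ∈ (0,1), and let w^α be as above. Let w : [−l/2, l/2] → ℝ be Lipschitz with 0 ≤ w' ≤ 1 a.e., w(0) = 0, ∫ w² dx = ∫ (w^α)² dx, and w ≠ w^α. Then ∫_{−l/2}^{l/2} w'(x)² w(x)² dx > ∫_{−l/2}^{l/2} (w^α)'(x)² (w^α)(x)² dx = (l³/12)α⁴. In other words, w^α is the unique minimizer of F₂(w) = ∫ w'² w² dx in its L²-constraint class. -/

import Mathlib

open MeasureTheory

/-- The odd profile `w^α` on `[-l/2, l/2]`. -/
noncomputable def wA (l α x : ℝ) : ℝ :=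
  if 0 ≤ x then
    (if x ≤ α ^ 2 * l / 2 then x
      else α * l / 2 * Real.sqrt (1 - (1 - x / (l / 2)) ^ 2 / (1 - α ^ 2)))
  else
    -(if -x ≤ α ^ 2 * l / 2 then -x
      else α * l / 2 * Real.sqrt (1 - (1 - (-x) / (l / 2)) ^ 2 / (1 - α ^ 2)))


open MeasureTheory intervalIntegral Set Filter Topology



lemma ftc_ae {F G : ℝ → ℝ} {a b : ℝ} {K : NNReal} (hab : a ≤ b)
    (hlip : LipschitzOnWith K F (Set.Icc a b))
    (hd : ∀ᵐ x ∂(volume.restrict (Set.Ioo a b)), HasDerivAt F (G x) x) :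
    ∫ x in a..b, G x = F b - F a := by
  obtain ⟨Ft, hFt, hEq⟩ := hlip.extend_real
  have hd' : ∀ᵐ x ∂(volume.restrict (Set.Ioo a b)), HasDerivAt Ft (G x) x := by
    filter_upwards [hd, ae_restrict_mem measurableSet_Ioo] with x hx hmem
    refine hx.congr_of_eventuallyEq ?_
    filter_upwards [Ioo_mem_nhds hmem.1 hmem.2] with y hy
    exact (hEq (Ioo_subset_Icc_self hy)).symm
  set u : ℕ → ℝ := fun n => ((n : ℝ) + 1)⁻¹ with hu_def
  have hu_pos : ∀ n, 0 < u n := fun n => by positivity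
  have hu_ne : ∀ n, u n ≠ 0 := fun n => (hu_pos n).ne'
  have hu_tend : Tendsto u atTop (𝓝 0) := tendsto_one_div_add_atTop_nhds_zero_nat.congr (by
    intro n; simp [hu_def, one_div])
  set φ : ℕ → ℝ → ℝ := fun n x => (Ft (x + u n) - Ft x) / u n with hφ_def
  have hcont : Continuous Ft := hFt.continuous
  have hint : ∀ s t : ℝ, IntervalIntegrable Ft volume s t := fun s t =>
    hcont.intervalIntegrable s t
  -- value of the integral of φ n
  have key : ∀ n, ∫ x in a..b, φ n x
      = ((∫ t in b..(b + u n), Ft t) - ∫ t in a..(a + u n), Ft t) / u n := by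
    intro n
    have h1 : ∫ x in a..b, φ n x
        = ((∫ x in a..b, Ft (x + u n)) - ∫ x in a..b, Ft x) / u n := by
      have hc1 : IntervalIntegrable (fun x => Ft (x + u n)) volume a b :=
        (hcont.comp (by continuity)).intervalIntegrable _ _
      simp only [hφ_def]
      rw [intervalIntegral.integral_div, intervalIntegral.integral_sub hc1 (hint _ _)]
    rw [h1, intervalIntegral.integral_comp_add_right]
    congr 1
    have h2 : (∫ t in a..(a + u n), Ft t) + ∫ t in (a + u n)..(b + u n), Ft t
        = ∫ t in a..(b + u n), Ft t := integral_add_adjacent_intervals (hint _ _) (hint _ _)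
    have h3 : (∫ t in a..b, Ft t) + ∫ t in b..(b + u n), Ft t
        = ∫ t in a..(b + u n), Ft t := integral_add_adjacent_intervals (hint _ _) (hint _ _)
    linarith
  -- convergence of boundary terms
  have bdry : ∀ c : ℝ, Tendsto (fun n => (∫ t in c..(c + u n), Ft t) / u n) atTop (𝓝 (Ft c)) := by
    intro c
    have hP : HasDerivAt (fun r => ∫ t in c..r, Ft t) (Ft c) c :=
      (intervalIntegral.integral_hasStrictDerivAt_right (hint c c)
        (hcont.stronglyMeasurableAtFilter _ _) hcont.continuousAt).hasDerivAt
    have hslope := hasDerivAt_iff_tendsto_slope.1 hP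
    have hseq : Tendsto (fun n => c + u n) atTop (𝓝[≠] c) := by
      rw [tendsto_nhdsWithin_iff]
      constructor
      · simpa using (tendsto_const_nhds.add hu_tend)
      · exact Eventually.of_forall fun n => by
          simp [(hu_pos n).ne']
    have := hslope.comp hseq
    refine this.congr fun n => ?_
    simp only [Function.comp, slope_def_field, intervalIntegral.integral_same, sub_zero,
      add_sub_cancel_left]
  have lim1 : Tendsto (fun n => ∫ x in a..b, φ n x) atTop (𝓝 (Ft b - Ft a)) := by
    simp only [key]
    exact ((bdry b).sub (bdry a)).congr fun n => (sub_div _ _ _).symm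
  -- dominated convergence
  set μ := volume.restrict (Set.Ioc a b) with hμ
  have hd'' : ∀ᵐ x ∂μ, HasDerivAt Ft (G x) x := by
    rw [hμ, ← Measure.restrict_congr_set Ioo_ae_eq_Ioc]
    exact hd'
  have lim2 : Tendsto (fun n => ∫ x, φ n x ∂μ) atTop (𝓝 (∫ x, G x ∂μ)) := by
    apply MeasureTheory.tendsto_integral_of_dominated_convergence (fun _ => (K : ℝ))
    · intro n
      exact ((hcont.comp (continuous_id.add continuous_const)).sub hcont).div_const
        (u n) |>.aestronglyMeasurable
    · exact integrableOn_const (by simp [Real.volume_Ioc])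
    · intro n
      refine Eventually.of_forall fun x => ?_
      have := hFt.dist_le_mul (x + u n) x
      rw [Real.dist_eq, Real.dist_eq] at this
      simp only [hφ_def, Real.norm_eq_abs, abs_div, abs_of_pos (hu_pos n)]
      rw [div_le_iff₀ (hu_pos n)]
      calc |Ft (x + u n) - Ft x| ≤ K * |x + u n - x| := this
        _ = K * u n := by rw [show x + u n - x = u n by ring, abs_of_pos (hu_pos n)]
    · filter_upwards [hd''] with x hx
      have hslope := hasDerivAt_iff_tendsto_slope.1 hx
      have hseq : Tendsto (fun n => x + u n) atTop (𝓝[≠] x) := by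
        rw [tendsto_nhdsWithin_iff]
        exact ⟨by simpa using (tendsto_const_nhds.add hu_tend),
          Eventually.of_forall fun n => by simp [(hu_pos n).ne']⟩
      refine (hslope.comp hseq).congr fun n => ?_
      simp only [hφ_def, Function.comp, slope_def_field, add_sub_cancel_left]
  have eqint : ∀ n, ∫ x, φ n x ∂μ = ∫ x in a..b, φ n x := fun n =>
    (intervalIntegral.integral_of_le hab).symm
  rw [funext eqint] at lim2
  have : Ft b - Ft a = ∫ x, G x ∂μ := tendsto_nhds_unique lim1 lim2
  rw [intervalIntegral.integral_of_le hab, ← hμ, ← this,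
    hEq (right_mem_Icc.2 hab), hEq (left_mem_Icc.2 hab)]



noncomputable def cst (α : ℝ) : ℝ := α^2/(1-α^2)
noncomputable def vv (m α x : ℝ) : ℝ := min x (cst α * (m - x))
noncomputable def uA (m α x : ℝ) : ℝ :=
  if x ≤ α^2*m then x^2/2 else (α*m)^2/2 * (1 - (1-x/m)^2/(1-α^2))

section model
variable {m α : ℝ}

lemma one_sub_sq_pos (h0 : 0 < α) (h1 : α < 1) : 0 < 1 - α^2 := by nlinarith

lemma cst_pos (h0 : 0 < α) (h1 : α < 1) : 0 < cst α :=
  div_pos (by positivity) (one_sub_sq_pos h0 h1)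

lemma vv_left (h0 : 0 < α) (h1 : α < 1) {x : ℝ} (hx : x ≤ α^2*m) : vv m α x = x := by
  have h2 := one_sub_sq_pos h0 h1
  refine min_eq_left ?_
  rw [cst, div_mul_eq_mul_div, le_div_iff₀ h2]
  nlinarith

lemma vv_right (h0 : 0 < α) (h1 : α < 1) {x : ℝ} (hx : α^2*m ≤ x) :
    vv m α x = cst α * (m - x) := by
  have h2 := one_sub_sq_pos h0 h1
  refine min_eq_right ?_
  rw [cst, div_mul_eq_mul_div, div_le_iff₀ h2]
  nlinarith

lemma vv_nonneg (h0 : 0 < α) (h1 : α < 1) {x : ℝ} (hx0 : 0 ≤ x) (hxm : x ≤ m) : 0 ≤ vv m α x :=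
  le_min hx0 (mul_nonneg (cst_pos h0 h1).le (by linarith))

lemma vv_le_self {x : ℝ} : vv m α x ≤ x := min_le_left _ _

lemma vv_zero (hm : 0 < m) (h0 : 0 < α) (h1 : α < 1) : vv m α 0 = 0 := by
  rw [vv, sub_zero, min_eq_left (mul_nonneg (cst_pos h0 h1).le hm.le)]

lemma vv_m (hm : 0 < m) (h0 : 0 < α) (h1 : α < 1) : vv m α m = 0 := by
  rw [vv_right h0 h1 (by nlinarith [mul_pos (one_sub_sq_pos h0 h1) hm]), sub_self, mul_zero]

lemma uA2_hasDeriv (hm : 0 < m) (h0 : 0 < α) (h1 : α < 1) (x : ℝ) :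
    HasDerivAt (fun t => (α*m)^2/2 * (1 - (1-t/m)^2/(1-α^2))) (cst α * (m - x)) x := by
  have h2 := (one_sub_sq_pos h0 h1).ne'
  have hd := (((((hasDerivAt_id x).div_const m).const_sub 1).pow 2).div_const
      (1-α^2)).const_sub 1 |>.const_mul ((α*m)^2/2)
  refine hd.congr_deriv ?_
  rw [cst]
  simp only [id_eq, Nat.cast_ofNat, Nat.add_one_sub_one, pow_one]
  field_simp

lemma uA_at_a (hm : 0 < m) (h0 : 0 < α) (h1 : α < 1) :
    (α*m)^2/2 * (1 - (1-(α^2*m)/m)^2/(1-α^2)) = (α^2*m)^2/2 := by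
  have h2 := (one_sub_sq_pos h0 h1).ne'
  field_simp
  ring

lemma hasDerivAt_uA (hm : 0 < m) (h0 : 0 < α) (h1 : α < 1) (x : ℝ) :
    HasDerivAt (uA m α) (vv m α x) x := by
  have h2 := (one_sub_sq_pos h0 h1).ne'
  rcases lt_trichotomy x (α^2*m) with h | h | h
  · have hx : HasDerivAt (fun t : ℝ => t^2/2) x x := by
      have := (hasDerivAt_pow 2 x).div_const 2
      exact this.congr_deriv (by ring)
    rw [vv_left h0 h1 h.le]
    refine hx.congr_of_eventuallyEq ?_
    filter_upwards [Iio_mem_nhds h] with t ht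
    exact if_pos ht.le
  · -- glue at a
    subst h
    rw [vv_left h0 h1 le_rfl]
    have hL : HasDerivWithinAt (uA m α) (α^2*m) (Iic (α^2*m)) (α^2*m) := by
      have hx : HasDerivAt (fun t : ℝ => t^2/2) (α^2*m) (α^2*m) := by
        have := (hasDerivAt_pow 2 (α^2*m)).div_const 2
        exact this.congr_deriv (by ring)
      refine (hx.hasDerivWithinAt).congr (fun t ht => ?_) ?_
      · exact if_pos ht
      · exact if_pos le_rfl
    have hR : HasDerivWithinAt (uA m α) (α^2*m) (Ici (α^2*m)) (α^2*m) := by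
      have hx := (uA2_hasDeriv hm h0 h1 (α^2*m)).hasDerivWithinAt (s := Ici (α^2*m))
      have hveq : cst α * (m - α^2*m) = α^2*m := by
        rw [cst]; field_simp
      rw [hveq] at hx
      refine hx.congr (fun t ht => ?_) ?_
      · rcases eq_or_lt_of_le (mem_Ici.1 ht) with h' | h'
        · rw [← h', uA, if_pos le_rfl]
          exact (uA_at_a hm h0 h1).symm
        · exact if_neg (not_le.2 h')
      · rw [uA, if_pos le_rfl]
        exact (uA_at_a hm h0 h1).symm
    have := hL.union hR
    rwa [Iic_union_Ici, hasDerivWithinAt_univ] at this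
  · rw [vv_right h0 h1 h.le]
    refine (uA2_hasDeriv hm h0 h1 x).congr_of_eventuallyEq ?_
    filter_upwards [Ioi_mem_nhds h] with t ht
    exact if_neg (not_le.2 ht)

lemma uA_zero (hm : 0 < m) (h0 : 0 < α) : uA m α 0 = 0 := by
  rw [uA, if_pos (by positivity)]
  norm_num

lemma uA_lip (hm : 0 < m) (h0 : 0 < α) (h1 : α < 1) :
    LipschitzOnWith (Real.toNNReal m) (uA m α) (Icc 0 m) := by
  refine (convex_Icc 0 m).lipschitzOnWith_of_nnnorm_hasDerivWithin_le
    (f' := vv m α) (fun x hx => (hasDerivAt_uA hm h0 h1 x).hasDerivWithinAt) (fun x hx => ?_)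
  rw [← NNReal.coe_le_coe, coe_nnnorm, Real.coe_toNNReal m hm.le, Real.norm_eq_abs,
    abs_le]
  constructor
  · linarith [vv_nonneg h0 h1 hx.1 hx.2]
  · linarith [vv_le_self (m := m) (α := α) (x := x), hx.2]

lemma vv_continuous : Continuous (vv m α) :=
  continuous_id.min (continuous_const.mul (continuous_const.sub continuous_id))

lemma hasDerivAt_vv (h0 : 0 < α) (h1 : α < 1) {x : ℝ} (hne : x ≠ α^2*m) :
    HasDerivAt (vv m α) (if x ≤ α^2*m then 1 else -cst α) x := by
  rcases lt_or_gt_of_ne hne with h | h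
  · rw [if_pos h.le]
    refine (hasDerivAt_id x).congr_of_eventuallyEq ?_
    filter_upwards [Iio_mem_nhds h] with t ht
    exact vv_left h0 h1 ht.le
  · rw [if_neg (not_le.2 h)]
    have hd : HasDerivAt (fun t => cst α * (m - t)) (-cst α) x := by
      have := ((hasDerivAt_id x).const_sub m).const_mul (cst α)
      exact this.congr_deriv (by ring)
    refine hd.congr_of_eventuallyEq ?_
    filter_upwards [Ioi_mem_nhds h] with t ht
    exact vv_right h0 h1 ht.le

lemma int_vv_sq (hm : 0 < m) (h0 : 0 < α) (h1 : α < 1) :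
    ∫ x in (0:ℝ)..m, (vv m α x)^2 = m^3*α^4/3 := by
  have h2 := (one_sub_sq_pos h0 h1).ne'
  have ha0 : 0 ≤ α^2*m := by positivity
  have ham : α^2*m ≤ m := by nlinarith [mul_pos (one_sub_sq_pos h0 h1) hm]
  have hint : ∀ s t : ℝ, IntervalIntegrable (fun x => (vv m α x)^2) volume s t :=
    fun s t => ((vv_continuous.pow 2).intervalIntegrable s t)
  rw [← integral_add_adjacent_intervals (b := α^2*m) (hint _ _) (hint _ _)]
  have e1 : ∫ x in (0:ℝ)..(α^2*m), (vv m α x)^2 = ∫ x in (0:ℝ)..(α^2*m), x^2 := by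
    refine integral_congr fun x hx => ?_
    rw [uIcc_of_le ha0] at hx
    rw [vv_left h0 h1 hx.2]
  have e2 : ∫ x in (α^2*m)..m, (vv m α x)^2
      = ∫ x in (α^2*m)..m, (cst α)^2 * (m-x)^2 := by
    refine integral_congr fun x hx => ?_
    rw [uIcc_of_le ham] at hx
    rw [vv_right h0 h1 hx.1]; ring
  have e3 : ∫ x in (α^2*m)..m, (cst α)^2*(m-x)^2
      = (cst α)^2 * ((m - α^2*m)^3/3) := by
    rw [intervalIntegral.integral_const_mul]
    have : (∫ x in (α^2*m)..m, (m-x)^2) = ∫ x in (m-m)..(m-α^2*m), x^2 :=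
      integral_comp_sub_left (fun y => y^2) m
    rw [this, sub_self, integral_pow]
    norm_num
  rw [e1, e2, e3, integral_pow]
  rw [cst]
  field_simp
  ring

lemma uA_def1 {m α : ℝ} (x : ℝ) (hx : x ≤ α^2*m) : uA m α x = x^2/2 := if_pos hx

lemma uA_def2 {m α : ℝ} (x : ℝ) (hx : ¬ x ≤ α^2*m) :
    uA m α x = (α*m)^2/2 * (1 - (1-x/m)^2/(1-α^2)) := if_neg hx

lemma uA_continuous {m α : ℝ} (hm : 0 < m) (h0 : 0 < α) (h1 : α < 1) :
    Continuous (uA m α) :=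
  continuous_iff_continuousAt.2 fun x => (hasDerivAt_uA hm h0 h1 x).continuousAt

lemma uA_def (hm : 0 < m) (x : ℝ) (hx : x ≤ α^2*m) : uA m α x = x^2/2 := if_pos hx

end model

section parts
variable {m α : ℝ}
lemma vv_dist (h0 : 0 < α) (h1 : α < 1) (x y : ℝ) :
    |vv m α x - vv m α y| ≤ max 1 (cst α) * |x - y| := by
  have hc := (cst_pos h0 h1).le
  have h := abs_min_sub_min_le_max x (cst α * (m - x)) y (cst α * (m - y))
  refine h.trans (max_le ?_ ?_)
  · exact le_mul_of_one_le_left (abs_nonneg _) (le_max_left _ _)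
  · have : cst α * (m - x) - cst α * (m - y) = cst α * (y - x) := by ring
    rw [this, abs_mul, abs_of_nonneg hc, abs_sub_comm]
    exact mul_le_mul_of_nonneg_right (le_max_right _ _) (abs_nonneg _)

lemma ftc_zero {K : NNReal} (hm : 0 < m) (U U' : ℝ → ℝ)
    (hUlip : LipschitzOnWith K U (Icc 0 m))
    (hd : ∀ᵐ x ∂(volume.restrict (Ioo 0 m)), HasDerivAt U (U' x) x) :
    ∀ t ∈ Icc 0 m, ∫ x in (0:ℝ)..t, U' x = U t - U 0 := by
  intro t ht
  exact ftc_ae ht.1 (hUlip.mono (Icc_subset_Icc le_rfl ht.2))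
    (hd.filter_mono (ae_mono (Measure.restrict_mono (Ioo_subset_Ioo le_rfl ht.2) le_rfl)))

lemma ibp (hm : 0 < m) (h0 : 0 < α) (h1 : α < 1) (U U' : ℝ → ℝ)
    (hU0 : U 0 = 0)
    (hUlip : LipschitzOnWith (Real.toNNReal m) U (Icc 0 m))
    (hd : ∀ᵐ x ∂(volume.restrict (Ioo 0 m)), HasDerivAt U (U' x) x ∧ |U' x| ≤ m) :
    ∫ x in (0:ℝ)..m, vv m α x * U' x
      = -(∫ x in (0:ℝ)..(α^2*m), U x) + cst α * ∫ x in (α^2*m)..m, U x := by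
  have h2 := one_sub_sq_pos h0 h1
  have ha0 : (0:ℝ) ≤ α^2*m := by positivity
  have ham : α^2*m ≤ m := by nlinarith [mul_pos h2 hm]
  have hcpos := cst_pos h0 h1
  set a := α^2*m with ha_def
  set sv : ℝ → ℝ := fun x => if x ≤ a then (1:ℝ) else -cst α with hsv_def
  -- bound on U
  have hUbd : ∀ x ∈ Icc (0:ℝ) m, |U x| ≤ m*m := by
    intro x hx
    have := hUlip.dist_le_mul x hx 0 (left_mem_Icc.2 hm.le)
    rw [Real.dist_eq, Real.dist_eq, hU0, sub_zero, sub_zero] at this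
    calc |U x| ≤ (Real.toNNReal m) * |x| := this
      _ ≤ m * m := by
          rw [Real.coe_toNNReal m hm.le]
          exact mul_le_mul le_rfl (abs_le.2 ⟨by linarith [hx.1], hx.2⟩) (abs_nonneg _) hm.le
  have hUcont : ContinuousOn U (Icc 0 m) := hUlip.continuousOn
  -- vv bound on Icc 0 m
  have hvbd : ∀ x ∈ Icc (0:ℝ) m, |vv m α x| ≤ m := by
    intro x hx
    rw [abs_le]
    constructor
    · linarith [vv_nonneg h0 h1 hx.1 hx.2]
    · linarith [vv_le_self (m := m) (α := α) (x := x), hx.2]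
  -- Lipschitz of the product
  set Kf : ℝ := m*m + m*m*(max 1 (cst α)) with hKf
  have hKf0 : 0 ≤ Kf := by positivity
  have hflip : LipschitzOnWith (Real.toNNReal Kf) (fun x => vv m α x * U x) (Icc 0 m) := by
    rw [lipschitzOnWith_iff_dist_le_mul]
    intro x hx y hy
    rw [Real.dist_eq, Real.dist_eq, Real.coe_toNNReal _ hKf0]
    have key : vv m α x * U x - vv m α y * U y
        = vv m α x * (U x - U y) + U y * (vv m α x - vv m α y) := by ring
    rw [key]
    have hd1 := hUlip.dist_le_mul x hx y hy
    rw [Real.dist_eq, Real.dist_eq, Real.coe_toNNReal m hm.le] at hd1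
    calc |vv m α x * (U x - U y) + U y * (vv m α x - vv m α y)|
        ≤ |vv m α x| * |U x - U y| + |U y| * |vv m α x - vv m α y| := by
          refine (abs_add_le _ _).trans ?_
          rw [abs_mul, abs_mul]
      _ ≤ m * (m * |x - y|) + (m*m) * (max 1 (cst α) * |x - y|) := by
          refine add_le_add ?_ ?_
          · exact mul_le_mul (hvbd x hx) hd1 (abs_nonneg _) hm.le
          · exact mul_le_mul (hUbd y hy) (vv_dist h0 h1 x y) (abs_nonneg _) (by positivity)
      _ = Kf * |x - y| := by rw [hKf]; ring
  -- a.e. x ≠ a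
  have hne : ∀ᵐ x ∂(volume.restrict (Ioo 0 m)), x ≠ a := by
    refine ae_iff.2 ?_
    have hset : {x : ℝ | ¬ x ≠ a} = {a} := by ext; simp
    rw [hset, Measure.restrict_apply (measurableSet_singleton _)]
    exact measure_mono_null inter_subset_left Real.volume_singleton
  -- derivative of the product
  have hfd : ∀ᵐ x ∂(volume.restrict (Ioo 0 m)),
      HasDerivAt (fun y => vv m α y * U y) (sv x * U x + vv m α x * U' x) x := by
    filter_upwards [hd, hne] with x hx hxne
    exact ((hasDerivAt_vv h0 h1 hxne).mul hx.1)
  have hftc := ftc_ae hm.le hflip hfd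
  rw [vv_m hm h0 h1, vv_zero hm h0 h1, zero_mul, zero_mul, sub_zero] at hftc
  -- measurability facts
  have hU'm : AEStronglyMeasurable U' (volume.restrict (Ioo 0 m)) := by
    refine ((measurable_deriv U).aestronglyMeasurable).congr ?_
    filter_upwards [hd] with x hx
    exact (hx.1.deriv).symm ▸ rfl
  have hres : volume.restrict (Ioo (0:ℝ) m) = volume.restrict (Ioc 0 m) :=
    Measure.restrict_congr_set Ioo_ae_eq_Ioc
  have hU'm2 : AEStronglyMeasurable U' (volume.restrict (Ioc 0 m)) := hres ▸ hU'm
  have hd2 : ∀ᵐ x ∂(volume.restrict (Ioc 0 m)), HasDerivAt U (U' x) x ∧ |U' x| ≤ m :=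
    hres ▸ hd
  have hmem : ∀ᵐ x ∂(volume.restrict (Ioc (0:ℝ) m)), x ∈ Ioc (0:ℝ) m :=
    ae_restrict_mem measurableSet_Ioc
  have hfin : volume (Ioc (0:ℝ) m) < ⊤ := by simp [Real.volume_Ioc]
  have hconst : ∀ C : ℝ, Integrable (fun _ : ℝ => C) (volume.restrict (Ioc (0:ℝ) m)) :=
    fun C => integrableOn_const hfin.ne
  -- integrability of sv * U
  have I1 : IntervalIntegrable (fun x => sv x * U x) volume 0 m := by
    rw [intervalIntegrable_iff_integrableOn_Ioc_of_le hm.le]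
    refine Integrable.mono' (hconst ((max 1 (cst α)) * (m*m))) ?_ ?_
    · refine AEStronglyMeasurable.mul ?_ ?_
      · refine (Measurable.ite measurableSet_Iic measurable_const
          measurable_const).aestronglyMeasurable
      · exact (hUcont.mono Ioc_subset_Icc_self).aestronglyMeasurable measurableSet_Ioc
    · filter_upwards [hmem] with x hx
      rw [Real.norm_eq_abs, abs_mul]
      refine mul_le_mul ?_ (hUbd x (Ioc_subset_Icc_self hx)) (abs_nonneg _) (by positivity)
      by_cases hc : x ≤ a
      · rw [show sv x = 1 from if_pos hc]; simp
      · rw [show sv x = -cst α from if_neg hc, abs_neg, abs_of_nonneg hcpos.le]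
        exact le_max_right _ _
  -- integrability of vv * U'
  have I2 : IntervalIntegrable (fun x => vv m α x * U' x) volume 0 m := by
    rw [intervalIntegrable_iff_integrableOn_Ioc_of_le hm.le]
    refine Integrable.mono' (hconst (m * m)) ?_ ?_
    · exact (vv_continuous.aestronglyMeasurable).mul hU'm2
    · filter_upwards [hmem, hd2] with x hx hdx
      rw [Real.norm_eq_abs, abs_mul]
      exact mul_le_mul (hvbd x (Ioc_subset_Icc_self hx)) hdx.2 (abs_nonneg _) hm.le
  have hsplit : (∫ x in (0:ℝ)..m, sv x * U x) + ∫ x in (0:ℝ)..m, vv m α x * U' x = 0 := by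
    rw [← intervalIntegral.integral_add I1 I2]
    exact hftc
  -- compute the sv*U integral
  have hsplit2 : (∫ x in (0:ℝ)..m, sv x * U x)
      = (∫ x in (0:ℝ)..a, U x) - cst α * ∫ x in a..m, U x := by
    rw [← integral_add_adjacent_intervals (b := a)
      (I1.mono_set (by rw [uIcc_of_le ha0, uIcc_of_le hm.le]; exact Icc_subset_Icc le_rfl ham))
      (I1.mono_set (by rw [uIcc_of_le ham, uIcc_of_le hm.le]; exact Icc_subset_Icc ha0 le_rfl))]
    have e1 : (∫ x in (0:ℝ)..a, sv x * U x) = ∫ x in (0:ℝ)..a, U x := by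
      refine integral_congr fun x hx => ?_
      rw [uIcc_of_le ha0] at hx
      rw [show sv x = 1 from if_pos hx.2, one_mul]
    have e2 : (∫ x in a..m, sv x * U x) = ∫ x in a..m, -cst α * U x := by
      refine integral_congr_ae ?_
      refine Eventually.of_forall fun x hx => ?_
      rw [uIoc_of_le ham] at hx
      rw [show sv x = -cst α from if_neg (not_le.2 hx.1)]
    rw [e1, e2, intervalIntegral.integral_const_mul]
    ring
  rw [hsplit2] at hsplit
  linarith

lemma half (hm : 0 < m) (h0 : 0 < α) (h1 : α < 1) (W W' : ℝ → ℝ) (C : NNReal)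
    (hlip : LipschitzOnWith C W (Icc 0 m))
    (hd : ∀ᵐ x ∂(volume.restrict (Ioo 0 m)), HasDerivAt W (W' x) x ∧ 0 ≤ W' x ∧ W' x ≤ 1)
    (hW0 : W 0 = 0) :
    ((∫ x in (0:ℝ)..m, (W' x)^2*(W x)^2) ≥ m^3*α^4/3
       + 2*cst α*((∫ x in (0:ℝ)..m, (W x)^2/2) - ∫ x in (0:ℝ)..m, uA m α x)
       + ∫ x in (0:ℝ)..m, (W x*W' x - vv m α x)^2)
    ∧ (0 ≤ ∫ x in (0:ℝ)..m, (W x*W' x - vv m α x)^2)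
    ∧ ((∫ x in (0:ℝ)..m, (W x*W' x - vv m α x)^2) = 0 →
        ∀ t ∈ Icc 0 m, (W t)^2 = 2*uA m α t)
    ∧ (∀ t ∈ Icc 0 m, 0 ≤ W t ∧ W t ≤ t) := by
  have h2 := one_sub_sq_pos h0 h1
  have hcpos := cst_pos h0 h1
  have ha0 : (0:ℝ) ≤ α^2*m := by positivity
  have ham : α^2*m ≤ m := by nlinarith [mul_pos h2 hm]
  have hres : ∀ t : ℝ, volume.restrict (Ioo (0:ℝ) t) = volume.restrict (Ioc 0 t) :=
    fun t => Measure.restrict_congr_set Ioo_ae_eq_Ioc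
  -- measurability of W'
  have hW'm : AEStronglyMeasurable W' (volume.restrict (Ioo 0 m)) := by
    refine ((measurable_deriv W).aestronglyMeasurable).congr ?_
    filter_upwards [hd] with x hx
    exact (hx.1.deriv).symm ▸ rfl
  -- integrability of W' on subintervals
  have hW'int : ∀ s t : ℝ, 0 ≤ s → s ≤ t → t ≤ m → IntervalIntegrable W' volume s t := by
    intro s t hs hst htm
    rw [intervalIntegrable_iff_integrableOn_Ioc_of_le hst]
    have hmono : volume.restrict (Ioc s t) ≤ volume.restrict (Ioo 0 m) := by
      rw [← Measure.restrict_congr_set Ioo_ae_eq_Ioc]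
      exact Measure.restrict_mono (Ioo_subset_Ioo hs htm) le_rfl
    refine Integrable.mono' ((integrableOn_const (C := (1:ℝ)) (by simp [Real.volume_Ioc])))
      (hW'm.mono_measure hmono) ?_
    filter_upwards [hd.filter_mono (ae_mono hmono)] with x hx
    rw [Real.norm_eq_abs, abs_le]
    exact ⟨by linarith [hx.2.1], hx.2.2⟩
  -- FTC increments for W
  have hinc : ∀ s t : ℝ, 0 ≤ s → s ≤ t → t ≤ m →
      0 ≤ W t - W s ∧ W t - W s ≤ t - s := by
    intro s t hs hst htm
    have hlip' : LipschitzOnWith C W (Icc s t) := hlip.mono (Icc_subset_Icc hs htm)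
    have hdsub := hd.filter_mono (ae_mono (Measure.restrict_mono (Ioo_subset_Ioo hs htm)
      (le_refl volume)))
    have hftc := ftc_ae hst hlip' (hdsub.mono fun x hx => hx.1)
    have hIccres : volume.restrict (Icc s t) = volume.restrict (Ioo s t) :=
      (Measure.restrict_congr_set Ioo_ae_eq_Icc).symm
    constructor
    · rw [← hftc]
      refine integral_nonneg_of_ae_restrict hst ?_
      rw [hIccres]
      exact hdsub.mono fun x hx => hx.2.1
    · rw [← hftc]
      have hone : (∫ x in s..t, (1:ℝ)) = t - s := by simp
      rw [← hone]
      refine integral_mono_ae_restrict hst (hW'int s t hs hst htm)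
        (intervalIntegrable_const) ?_
      rw [hIccres]
      exact hdsub.mono fun x hx => hx.2.2
  have hWb : ∀ t ∈ Icc (0:ℝ) m, 0 ≤ W t ∧ W t ≤ t := by
    intro t ht
    have := hinc 0 t le_rfl ht.1 ht.2
    rw [hW0] at this
    exact ⟨by linarith [this.1], by linarith [this.2]⟩
  have hW1 : ∀ x ∈ Icc (0:ℝ) m, ∀ y ∈ Icc (0:ℝ) m, |W x - W y| ≤ |x - y| := by
    intro x hx y hy
    rcases le_total x y with h | h
    · have h' := hinc x y hx.1 h hy.2
      rw [abs_sub_comm, abs_of_nonneg h'.1, abs_sub_comm x y, abs_of_nonneg (by linarith : (0:ℝ) ≤ y - x)]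
      linarith [h'.2]
    · have h' := hinc y x hy.1 h hx.2
      rw [abs_of_nonneg h'.1, abs_of_nonneg (by linarith : (0:ℝ) ≤ x - y)]
      linarith [h'.2]
  -- u = W^2/2
  set u : ℝ → ℝ := fun x => (W x)^2/2 with hu_def
  have hu0 : u 0 = 0 := by simp only [hu_def, hW0]; norm_num
  have hux : ∀ x, u x = (W x)^2/2 := fun x => rfl
  have hulip : LipschitzOnWith (Real.toNNReal m) u (Icc 0 m) := by
    rw [lipschitzOnWith_iff_dist_le_mul]
    intro x hx y hy
    rw [Real.dist_eq, Real.dist_eq, Real.coe_toNNReal m hm.le, hux, hux]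
    have hxb := hWb x hx
    have hyb := hWb y hy
    have key : (W x)^2/2 - (W y)^2/2 = (W x + W y)/2 * (W x - W y) := by ring
    rw [key, abs_mul]
    have h1 : |(W x + W y)/2| ≤ m := by
      rw [abs_of_nonneg (by linarith [hxb.1, hyb.1] : (0:ℝ) ≤ (W x + W y)/2)]
      have := hxb.2
      have := hyb.2
      have := hx.2
      have := hy.2
      linarith
    exact mul_le_mul h1 (hW1 x hx y hy) (abs_nonneg _) hm.le
  -- derivative of u
  have hud : ∀ᵐ x ∂(volume.restrict (Ioo 0 m)),
      HasDerivAt u (W x * W' x) x ∧ |W x * W' x| ≤ m := by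
    filter_upwards [hd, ae_restrict_mem measurableSet_Ioo] with x hx hxm
    have hb := hWb x (Ioo_subset_Icc_self hxm)
    constructor
    · have hD := (hx.1.pow 2).div_const 2
      exact hD.congr_deriv (by ring)
    · rw [abs_mul]
      calc |W x| * |W' x| ≤ m * 1 := by
            refine mul_le_mul ?_ ?_ (abs_nonneg _) hm.le
            · rw [abs_of_nonneg hb.1]; linarith [hxm.2.le, hb.2]
            · rw [abs_of_nonneg hx.2.1]; exact hx.2.2
        _ = m := mul_one m
  have E1 := ibp hm h0 h1 u (fun x => W x * W' x) hu0 hulip hud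
  have E2 : ∫ x in (0:ℝ)..m, vv m α x * vv m α x
      = -(∫ x in (0:ℝ)..(α^2*m), uA m α x) + cst α * ∫ x in (α^2*m)..m, uA m α x := by
    refine ibp hm h0 h1 (uA m α) (vv m α) (uA_zero hm h0) (uA_lip hm h0 h1) ?_
    filter_upwards [ae_restrict_mem measurableSet_Ioo] with x hxm
    refine ⟨hasDerivAt_uA hm h0 h1 x, ?_⟩
    rw [abs_le]
    exact ⟨by linarith [vv_nonneg h0 h1 hxm.1.le hxm.2.le],
      by linarith [vv_le_self (m := m) (α := α) (x := x), hxm.2.le]⟩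
  have hvv2 : ∫ x in (0:ℝ)..m, (vv m α x)^2 = ∫ x in (0:ℝ)..m, vv m α x * vv m α x :=
    integral_congr fun x _ => by ring
  -- integrability facts
  have hWm : AEStronglyMeasurable W (volume.restrict (Ioc 0 m)) :=
    (hlip.continuousOn.mono Ioc_subset_Icc_self).aestronglyMeasurable measurableSet_Ioc
  have hW'm2 : AEStronglyMeasurable W' (volume.restrict (Ioc 0 m)) := by
    rwa [← Measure.restrict_congr_set Ioo_ae_eq_Ioc]
  have hWW'm : AEStronglyMeasurable (fun x => W x * W' x) (volume.restrict (Ioc 0 m)) :=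
    hWm.mul hW'm2
  have hWW'bd : ∀ᵐ x ∂(volume.restrict (Ioc 0 m)), |W x * W' x| ≤ m := by
    rw [← Measure.restrict_congr_set Ioo_ae_eq_Ioc]
    exact hud.mono fun x hx => hx.2
  have hvbd : ∀ x ∈ Ioc (0:ℝ) m, |vv m α x| ≤ m := by
    intro x hx
    rw [abs_le]
    exact ⟨by linarith [vv_nonneg h0 h1 hx.1.le hx.2],
      by linarith [vv_le_self (m := m) (α := α) (x := x), hx.2]⟩
  have hconst : ∀ Cc : ℝ, Integrable (fun _ : ℝ => Cc) (volume.restrict (Ioc (0:ℝ) m)) :=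
    fun Cc => integrableOn_const (by simp [Real.volume_Ioc])
  have J1 : IntervalIntegrable (fun x => (W x*W' x - vv m α x)^2) volume 0 m := by
    rw [intervalIntegrable_iff_integrableOn_Ioc_of_le hm.le]
    refine Integrable.mono' (hconst ((m + m)^2))
      ((continuous_pow 2).comp_aestronglyMeasurable
        (hWW'm.sub vv_continuous.aestronglyMeasurable)) ?_
    filter_upwards [hWW'bd, ae_restrict_mem measurableSet_Ioc] with x hx hxm
    rw [Real.norm_eq_abs, abs_pow]
    refine pow_le_pow_left₀ (abs_nonneg _) ?_ 2
    calc |W x*W' x - vv m α x| ≤ |W x*W' x| + |vv m α x| := abs_sub _ _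
      _ ≤ m + m := add_le_add hx (hvbd x hxm)
  have J2 : IntervalIntegrable (fun x => vv m α x * (W x * W' x)) volume 0 m := by
    rw [intervalIntegrable_iff_integrableOn_Ioc_of_le hm.le]
    refine Integrable.mono' (hconst (m*m))
      (vv_continuous.aestronglyMeasurable.mul hWW'm) ?_
    filter_upwards [hWW'bd, ae_restrict_mem measurableSet_Ioc] with x hx hxm
    rw [Real.norm_eq_abs, abs_mul]
    exact mul_le_mul (hvbd x hxm) hx (abs_nonneg _) hm.le
  have J3 : IntervalIntegrable (fun x => (vv m α x)^2) volume 0 m :=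
    (vv_continuous.pow 2).intervalIntegrable _ _
  have expand : (∫ x in (0:ℝ)..m, (W' x)^2*(W x)^2)
      = (∫ x in (0:ℝ)..m, (W x*W' x - vv m α x)^2)
        + (2*(∫ x in (0:ℝ)..m, vv m α x * (W x*W' x)) - ∫ x in (0:ℝ)..m, (vv m α x)^2) := by
    have hpt : (∫ x in (0:ℝ)..m, (W' x)^2*(W x)^2)
        = ∫ x in (0:ℝ)..m,
            ((W x*W' x - vv m α x)^2 + (2*(vv m α x * (W x*W' x)) - (vv m α x)^2)) :=
      integral_congr fun x _ => by ring
    rw [hpt, integral_add J1 ((J2.const_mul 2).sub J3),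
      intervalIntegral.integral_sub (J2.const_mul 2) J3, intervalIntegral.integral_const_mul]
  -- u, uA integrals on pieces
  have hucont : ContinuousOn u (Icc 0 m) := (hlip.continuousOn.pow 2).div_const 2
  have huint1 : IntervalIntegrable u volume 0 (α^2*m) :=
    (hucont.mono (by rw [uIcc_of_le ha0]; exact Icc_subset_Icc le_rfl ham)).intervalIntegrable
  have huint2 : IntervalIntegrable u volume (α^2*m) m :=
    (hucont.mono (by rw [uIcc_of_le ham]; exact Icc_subset_Icc ha0 le_rfl)).intervalIntegrable
  have huAcont : Continuous (uA m α) := by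
    rw [continuous_iff_continuousAt]
    exact fun x => (hasDerivAt_uA hm h0 h1 x).continuousAt
  have husplit : (∫ x in (0:ℝ)..(α^2*m), u x) + (∫ x in (α^2*m)..m, u x)
      = ∫ x in (0:ℝ)..m, u x := integral_add_adjacent_intervals huint1 huint2
  have huAsplit : (∫ x in (0:ℝ)..(α^2*m), uA m α x) + (∫ x in (α^2*m)..m, uA m α x)
      = ∫ x in (0:ℝ)..m, uA m α x :=
    integral_add_adjacent_intervals (huAcont.intervalIntegrable _ _)
      (huAcont.intervalIntegrable _ _)
  have hle1 : (∫ x in (0:ℝ)..(α^2*m), u x) ≤ ∫ x in (0:ℝ)..(α^2*m), uA m α x := by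
    refine integral_mono_on ha0 huint1 (huAcont.intervalIntegrable _ _) fun x hx => ?_
    rw [uA_def hm x hx.2, hux]
    have hb := hWb x ⟨hx.1, le_trans hx.2 ham⟩
    have : (W x)^2 ≤ x^2 := by nlinarith [hb.1, hb.2]
    linarith
  refine ⟨?_, ?_, ?_, hWb⟩
  · rw [ge_iff_le, expand]
    rw [E1, hvv2, E2]
    nlinarith [hle1, mul_nonneg hcpos.le (sub_nonneg.2 hle1), husplit, huAsplit,
      int_vv_sq hm h0 h1, hvv2, E2]
  · exact integral_nonneg hm.le fun x _ => sq_nonneg _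
  · intro hR0 t ht
    have hint : Integrable (fun x => (W x*W' x - vv m α x)^2) (volume.restrict (Ioc 0 m)) :=
      (intervalIntegrable_iff_integrableOn_Ioc_of_le hm.le).1 J1
    have hIoc : ∫ x in Ioc (0:ℝ) m, (W x*W' x - vv m α x)^2 = 0 := by
      rw [← integral_of_le hm.le]; exact hR0
    have heq := (MeasureTheory.integral_eq_zero_iff_of_nonneg_ae
      (Eventually.of_forall fun x => sq_nonneg _) hint).1 hIoc
    have hae : ∀ᵐ x ∂(volume.restrict (Ioc (0:ℝ) m)), W x * W' x = vv m α x := by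
      filter_upwards [heq] with x hx
      have : (W x*W' x - vv m α x)^2 = 0 := hx
      have := pow_eq_zero_iff (n := 2) (by norm_num) |>.1 this
      linarith [this]
    have hae' : ∀ᵐ x ∂(volume : Measure ℝ), x ∈ Ioc (0:ℝ) m → W x * W' x = vv m α x :=
      (ae_restrict_iff' measurableSet_Ioc).1 hae
    have hftcu := ftc_zero hm u (fun x => W x * W' x) hulip (hud.mono fun x hx => hx.1) t ht
    have hftcuA := ftc_zero hm (uA m α) (vv m α) (uA_lip hm h0 h1)
      (Eventually.of_forall fun x => hasDerivAt_uA hm h0 h1 x) t ht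
    rw [hu0, sub_zero] at hftcu
    rw [uA_zero hm h0, sub_zero] at hftcuA
    have hcongr : (∫ x in (0:ℝ)..t, W x * W' x) = ∫ x in (0:ℝ)..t, vv m α x := by
      refine integral_congr_ae ?_
      filter_upwards [hae'] with x hx hxt
      rw [uIoc_of_le ht.1] at hxt
      exact hx (Ioc_subset_Ioc le_rfl ht.2 hxt)
    have : u t = uA m α t := by rw [← hftcu, hcongr, hftcuA]
    rw [hux] at this
    linarith


end parts

section
variable {l α : ℝ}

lemma wA_zero (ha : 0 ≤ α^2*l/2) : wA l α 0 = 0 := by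
  rw [wA, if_pos le_rfl, if_pos ha]

lemma wA_odd (ha : 0 ≤ α^2*l/2) (x : ℝ) : wA l α (-x) = - wA l α x := by
  rcases lt_trichotomy x 0 with h | h | h
  · rw [wA, wA, if_pos (by linarith : (0:ℝ) ≤ -x), if_neg (not_le.2 h)]
    simp only [neg_neg]
  · subst h
    rw [neg_zero, wA_zero ha, neg_zero]
  · rw [wA, wA, if_neg (by simpa using not_le.2 h), if_pos h.le]
    simp only [neg_neg]

lemma Q_nonneg (hl : 0 < l) (h0 : 0 < α) (h1 : α < 1) {x : ℝ}
    (hx1 : α^2*l/2 ≤ x) (hx2 : x ≤ l/2) :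
    0 ≤ 1 - (1 - x/(l/2))^2/(1-α^2) := by
  have h2 := one_sub_sq_pos h0 h1
  have hm : (0:ℝ) < l/2 := by linarith
  have hy1 : 0 ≤ 1 - x/(l/2) := by
    rw [sub_nonneg, div_le_one hm]; linarith
  have hy2 : 1 - x/(l/2) ≤ 1 - α^2 := by
    have : α^2 ≤ x/(l/2) := by
      rw [le_div_iff₀ hm]; linarith
    linarith
  rw [sub_nonneg, div_le_one h2]
  nlinarith

lemma wA_sq (hl : 0 < l) (h0 : 0 < α) (h1 : α < 1) {x : ℝ} (hx0 : 0 ≤ x) (hxm : x ≤ l/2) :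
    (wA l α x)^2 = 2 * uA (l/2) α x := by
  have h2 := one_sub_sq_pos h0 h1
  have hal : α^2*(l/2) = α ^ 2 * l / 2 := by ring
  rw [wA, if_pos hx0]
  by_cases h : x ≤ α ^ 2 * l / 2
  · rw [if_pos h, uA_def1 x (by linarith [hal.ge, hal.le] : x ≤ α^2*(l/2))]
    ring
  · rw [if_neg h, uA_def2 x (by rw [hal]; exact h)]
    rw [mul_pow, Real.sq_sqrt (Q_nonneg hl h0 h1 (not_le.1 h).le hxm)]
    ring

lemma wA_nonneg (hl : 0 < l) (h0 : 0 < α) {x : ℝ} (hx0 : 0 ≤ x) : 0 ≤ wA l α x := by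
  rw [wA, if_pos hx0]
  by_cases h : x ≤ α ^ 2 * l / 2
  · rwa [if_pos h]
  · rw [if_neg h]
    positivity

end

section energy
variable {l α : ℝ}

lemma piece_eval {φ ψ : ℝ → ℝ} {p q : ℝ} (hpq : p ≤ q) (hψ : Continuous ψ)
    (heq : ∀ x ∈ Ioo p q, φ x = ψ x) :
    IntervalIntegrable φ volume p q ∧ (∫ x in p..q, φ x) = ∫ x in p..q, ψ x := by
  have hae : ∀ᵐ x ∂(volume : Measure ℝ), x ∈ Set.uIoc p q → φ x = ψ x := by
    have hq : ∀ᵐ x : ℝ ∂volume, x ≠ q := by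
      rw [ae_iff]
      have hs : {x : ℝ | ¬ x ≠ q} = {q} := by ext y; simp
      rw [hs]; exact Real.volume_singleton
    filter_upwards [hq] with x hne hmem
    rw [uIoc_of_le hpq] at hmem
    exact heq x ⟨hmem.1, lt_of_le_of_ne hmem.2 hne⟩
  constructor
  · rw [intervalIntegrable_iff_integrableOn_Ioc_of_le hpq]
    refine Integrable.congr (hψ.integrableOn_Ioc) ?_
    refine (ae_restrict_iff' measurableSet_Ioc).2 ?_
    filter_upwards [hae] with x hx hmem
    exact (hx (by rwa [uIoc_of_le hpq])).symm
  · exact integral_congr_ae hae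

lemma Q_pos (hl : 0 < l) (h0 : 0 < α) (h1 : α < 1) {x : ℝ}
    (hx1 : α^2*l/2 < x) (hx2 : x < l/2) :
    0 < 1 - (1 - x/(l/2))^2/(1-α^2) := by
  have h2 := one_sub_sq_pos h0 h1
  have hm : (0:ℝ) < l/2 := by linarith
  have hy1 : 0 < 1 - x/(l/2) := by
    rw [sub_pos, div_lt_one hm]; linarith
  have hy2 : 1 - x/(l/2) < 1 - α^2 := by
    have : α^2 < x/(l/2) := by
      rw [lt_div_iff₀ hm]; linarith
    linarith
  rw [sub_pos, div_lt_one h2]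
  nlinarith

lemma model_energy (hl : 0 < l) (h0 : 0 < α) (h1 : α < 1) :
    (∫ x in (-(l/2))..(l/2), (deriv (wA l α) x)^2 * (wA l α x)^2) = l^3/12*α^4 := by
  have h2 := one_sub_sq_pos h0 h1
  have h2' := h2.ne'
  have hm : (0:ℝ) < l/2 := by linarith
  have ha0 : (0:ℝ) < α^2*l/2 := by positivity
  have ham : α^2*l/2 < l/2 := by nlinarith [mul_pos h2 hm]
  set φ : ℝ → ℝ := fun x => (deriv (wA l α) x)^2 * (wA l α x)^2 with hφ
  -- the right-branch model function and its derivative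
  set F : ℝ → ℝ := fun t => α * l / 2 * Real.sqrt (1 - (1 - t / (l / 2)) ^ 2 / (1 - α ^ 2))
    with hF
  have hFder : ∀ y ∈ Ioo (α^2*l/2) (l/2), HasDerivAt F
      (α*l/2*((2*(1-y/(l/2))/((l/2)*(1-α^2)))/(2*Real.sqrt (1 - (1-y/(l/2))^2/(1-α^2))))) y := by
    intro y hy
    have hQpos := Q_pos hl h0 h1 hy.1 hy.2
    have hQ : HasDerivAt (fun t : ℝ => 1 - (1-t/(l/2))^2/(1-α^2))
        (2*(1-y/(l/2))/((l/2)*(1-α^2))) y := by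
      have hb := (((((hasDerivAt_id y).div_const (l/2)).const_sub 1).pow 2).div_const
        (1-α^2)).const_sub 1
      refine hb.congr_deriv ?_
      simp only [id_eq, Nat.cast_ofNat, Nat.add_one_sub_one, pow_one]
      field_simp
    exact (hQ.sqrt hQpos.ne').const_mul (α*l/2)
  -- value of φ on the right piece
  have hval : ∀ x ∈ Ioo (α^2*l/2) (l/2), φ x = (α^2/(1-α^2))^2*(l/2-x)^2 := by
    intro x hx
    have hQpos := Q_pos hl h0 h1 hx.1 hx.2
    have hQ0 := hQpos.le
    have hsne : Real.sqrt (1 - (1-x/(l/2))^2/(1-α^2)) ≠ 0 := (Real.sqrt_pos.2 hQpos).ne'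
    have hE : wA l α =ᶠ[nhds x] F := by
      filter_upwards [Ioo_mem_nhds hx.1 hx.2] with t ht
      rw [wA, if_pos (by linarith [ht.1] : (0:ℝ) ≤ t), if_neg (not_le.2 ht.1), hF]
    have hw : HasDerivAt (wA l α)
        (α*l/2*((2*(1-x/(l/2))/((l/2)*(1-α^2)))/(2*Real.sqrt (1 - (1-x/(l/2))^2/(1-α^2))))) x :=
      (hFder x hx).congr_of_eventuallyEq hE
    have key : ∀ A B s : ℝ, s ≠ 0 → (A*(B/(2*s)))^2*(A*s)^2 = A^4*B^2/4 := by
      intro A B s hs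
      field_simp
      ring
    show (deriv (wA l α) x)^2 * (wA l α x)^2 = (α^2/(1-α^2))^2*(l/2-x)^2
    rw [hw.deriv, wA, if_pos (le_of_lt (lt_trans ha0 hx.1)), if_neg (not_le.2 hx.1),
      key (α*l/2) (2*(1-x/(l/2))/((l/2)*(1-α^2))) _ hsne]
    field_simp
    ring
  -- middle piece value
  have hmid : ∀ x ∈ Ioo (-(α^2*l/2)) (α^2*l/2), φ x = x^2 := by
    intro x hx
    have hid : wA l α =ᶠ[nhds x] (fun t => t) := by
      filter_upwards [Ioo_mem_nhds hx.1 hx.2] with t ht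
      rcases le_or_gt 0 t with h | h
      · rw [wA, if_pos h, if_pos ht.2.le]
      · rw [wA, if_neg (not_le.2 h), if_pos (by linarith [ht.1] : -t ≤ α^2*l/2), neg_neg]
    have hw : HasDerivAt (wA l α) 1 x := (hasDerivAt_id x).congr_of_eventuallyEq hid
    have hvx : wA l α x = x := hid.self_of_nhds
    show (deriv (wA l α) x)^2 * (wA l α x)^2 = x^2
    rw [hw.deriv, hvx, one_pow, one_mul]
  -- left piece value
  have hleft : ∀ x ∈ Ioo (-(l/2)) (-(α^2*l/2)), φ x = (α^2/(1-α^2))^2*(l/2+x)^2 := by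
    intro x hx
    have hx' : -x ∈ Ioo (α^2*l/2) (l/2) := ⟨by linarith [hx.2], by linarith [hx.1]⟩
    have hQpos := Q_pos hl h0 h1 hx'.1 hx'.2
    have hsne : Real.sqrt (1 - (1-(-x)/(l/2))^2/(1-α^2)) ≠ 0 := (Real.sqrt_pos.2 hQpos).ne'
    have hcomp : HasDerivAt (fun t => -(F (-t)))
        (α*l/2*((2*(1-(-x)/(l/2))/((l/2)*(1-α^2)))/(2*Real.sqrt (1 - (1-(-x)/(l/2))^2/(1-α^2))))) x := by
      have hc1 := ((hFder (-x) hx').comp x (hasDerivAt_neg x)).neg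
      exact hc1.congr_deriv (by ring)
    have hE : wA l α =ᶠ[nhds x] (fun t => -(F (-t))) := by
      filter_upwards [Ioo_mem_nhds hx.1 hx.2] with t ht
      have htneg : t < 0 := by linarith [ht.2, ha0]
      rw [wA, if_neg (not_le.2 htneg), hF]
      rw [if_neg (not_le.2 (by linarith [ht.2] : α^2*l/2 < -t))]
    have hw := hcomp.congr_of_eventuallyEq hE
    have hvx : wA l α x = -(α*l/2*Real.sqrt (1 - (1-(-x)/(l/2))^2/(1-α^2))) := hE.self_of_nhds
    have key : ∀ A B s : ℝ, s ≠ 0 → (A*(B/(2*s)))^2*(A*s)^2 = A^4*B^2/4 := by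
      intro A B s hs
      field_simp
      ring
    show (deriv (wA l α) x)^2 * (wA l α x)^2 = (α^2/(1-α^2))^2*(l/2+x)^2
    rw [hw.deriv, hvx, neg_sq,
      key (α*l/2) (2*(1-(-x)/(l/2))/((l/2)*(1-α^2))) _ hsne]
    field_simp
    ring
  -- assemble
  have hcont1 : Continuous fun x : ℝ => (α^2/(1-α^2))^2*(l/2+x)^2 :=
    continuous_const.mul ((continuous_const.add continuous_id).pow 2)
  have hcont2 : Continuous fun x : ℝ => x^2 := continuous_pow 2
  have hcont3 : Continuous fun x : ℝ => (α^2/(1-α^2))^2*(l/2-x)^2 :=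
    continuous_const.mul ((continuous_const.sub continuous_id).pow 2)
  obtain ⟨i1, e1⟩ := piece_eval (by linarith : -(l/2) ≤ -(α^2*l/2)) hcont1 hleft
  obtain ⟨i2, e2⟩ := piece_eval (by linarith : -(α^2*l/2) ≤ α^2*l/2) hcont2 hmid
  obtain ⟨i3, e3⟩ := piece_eval ham.le hcont3 hval
  have hsplit1 : (∫ x in (-(l/2))..(-(α^2*l/2)), φ x) + (∫ x in (-(α^2*l/2))..(α^2*l/2), φ x)
      = ∫ x in (-(l/2))..(α^2*l/2), φ x := integral_add_adjacent_intervals i1 i2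
  have hsplit2 : (∫ x in (-(l/2))..(α^2*l/2), φ x) + (∫ x in (α^2*l/2)..(l/2), φ x)
      = ∫ x in (-(l/2))..(l/2), φ x := integral_add_adjacent_intervals (i1.trans i2) i3
  have c1 : (∫ x in (-(l/2))..(-(α^2*l/2)), (α^2/(1-α^2))^2*(l/2+x)^2)
      = (α^2/(1-α^2))^2 * (((-(α^2*l/2)+l/2)^3 - (-(l/2)+l/2)^3)/3) := by
    rw [intervalIntegral.integral_const_mul]
    congr 1
    have hcc : (∫ x in (-(l/2))..(-(α^2*l/2)), (l/2+x)^2)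
        = ∫ x in (-(l/2)+l/2)..(-(α^2*l/2)+l/2), x^2 := by
      rw [← intervalIntegral.integral_comp_add_right (fun y => y^2) (l/2)]
      exact integral_congr fun x _ => by ring
    rw [hcc, integral_pow]
    norm_num
  have c3 : (∫ x in (α^2*l/2)..(l/2), (α^2/(1-α^2))^2*(l/2-x)^2)
      = (α^2/(1-α^2))^2 * (((l/2-α^2*l/2)^3 - (l/2-l/2)^3)/3) := by
    rw [intervalIntegral.integral_const_mul]
    congr 1
    have hcc : (∫ x in (α^2*l/2)..(l/2), (l/2-x)^2)
        = ∫ x in (l/2-l/2)..(l/2-α^2*l/2), x^2 := integral_comp_sub_left (fun y => y^2) (l/2)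
    rw [hcc, integral_pow]
    norm_num
  rw [← hsplit2, ← hsplit1, e1, e2, e3, c1, c3, integral_pow]
  field_simp
  ring

end energy
theorem stmt13 (l α : ℝ) (hl : 0 < l) (hα : α ∈ Set.Ioo (0 : ℝ) 1)
    (w w' : ℝ → ℝ) (C : NNReal)
    (hlip : LipschitzOnWith C w (Set.Icc (-(l/2)) (l/2)))
    (hderiv : ∀ᵐ x ∂(volume.restrict (Set.Icc (-(l/2)) (l/2))),
      HasDerivAt w (w' x) x ∧ 0 ≤ w' x ∧ w' x ≤ 1)
    (h0 : w 0 = 0)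
    (hL2 : (∫ x in (-(l/2))..(l/2), (w x) ^ 2)
        = ∫ x in (-(l/2))..(l/2), (wA l α x) ^ 2)
    (hne : ∃ x ∈ Set.Icc (-(l/2)) (l/2), w x ≠ wA l α x) :
    (∫ x in (-(l/2))..(l/2), (w' x) ^ 2 * (w x) ^ 2) > l ^ 3 / 12 * α ^ 4 ∧
    (∫ x in (-(l/2))..(l/2), (deriv (wA l α) x) ^ 2 * (wA l α x) ^ 2)
      = l ^ 3 / 12 * α ^ 4 := by
  obtain ⟨hα0, hα1⟩ := hα
  have h2 := one_sub_sq_pos hα0 hα1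
  have hm : (0:ℝ) < l/2 := by linarith
  have ha2 : (0:ℝ) ≤ α^2*l/2 := by positivity
  refine ⟨?_, model_energy hl hα0 hα1⟩
  -- right half
  have hsub1 : Ioo (0:ℝ) (l/2) ⊆ Icc (-(l/2)) (l/2) :=
    fun x hx => ⟨by linarith [hx.1], hx.2.le⟩
  have hdR : ∀ᵐ x ∂(volume.restrict (Ioo 0 (l/2))),
      HasDerivAt w (w' x) x ∧ 0 ≤ w' x ∧ w' x ≤ 1 :=
    hderiv.filter_mono (ae_mono (Measure.restrict_mono hsub1 le_rfl))
  have HR := half hm hα0 hα1 w w' C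
    (hlip.mono (Icc_subset_Icc (by linarith) le_rfl)) hdR h0
  -- left half via reflection
  set Wl : ℝ → ℝ := fun x => -w (-x) with hWl
  set W'l : ℝ → ℝ := fun x => w' (-x) with hW'l
  have hlipL : LipschitzOnWith C Wl (Icc 0 (l/2)) := by
    rw [lipschitzOnWith_iff_dist_le_mul]
    intro x hx y hy
    have h1 := hlip.dist_le_mul (-x) ⟨by linarith [hx.2], by linarith [hx.1]⟩
      (-y) ⟨by linarith [hy.2], by linarith [hy.1]⟩
    calc dist (Wl x) (Wl y) = dist (w (-x)) (w (-y)) := dist_neg_neg _ _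
      _ ≤ C * dist (-x) (-y) := h1
      _ = C * dist x y := by rw [dist_neg_neg]
  have hdL : ∀ᵐ x ∂(volume.restrict (Ioo 0 (l/2))),
      HasDerivAt Wl (W'l x) x ∧ 0 ≤ W'l x ∧ W'l x ≤ 1 := by
    have hsub2 : Ioo (-(l/2)) (0:ℝ) ⊆ Icc (-(l/2)) (l/2) :=
      fun x hx => ⟨hx.1.le, by linarith [hx.2]⟩
    have hdl0 : ∀ᵐ x ∂(volume.restrict (Ioo (-(l/2)) 0)),
        HasDerivAt w (w' x) x ∧ 0 ≤ w' x ∧ w' x ≤ 1 :=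
      hderiv.filter_mono (ae_mono (Measure.restrict_mono hsub2 le_rfl))
    have hglob := (ae_restrict_iff' measurableSet_Ioo).1 hdl0
    have hneg : ∀ᵐ x ∂(volume : Measure ℝ), -x ∈ Ioo (-(l/2)) 0 →
        (HasDerivAt w (w' (-x)) (-x) ∧ 0 ≤ w' (-x) ∧ w' (-x) ≤ 1) :=
      ((Measure.measurePreserving_neg
        (volume : Measure ℝ)).quasiMeasurePreserving.tendsto_ae).eventually hglob
    rw [ae_restrict_iff' measurableSet_Ioo]
    filter_upwards [hneg] with x hx hmem
    have hP := hx ⟨by linarith [hmem.2], by linarith [hmem.1]⟩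
    refine ⟨?_, hP.2.1, hP.2.2⟩
    have hc := (hP.1.comp x (hasDerivAt_neg x)).neg
    have he : -(w' (-x) * -1) = W'l x := by rw [hW'l]; ring
    rw [he] at hc
    exact hc
  have hW0L : Wl 0 = 0 := by rw [hWl]; simp [h0]
  have HL := half hm hα0 hα1 Wl W'l C hlipL hdL hW0L
  -- integral transfers
  have T1 : (∫ x in (0:ℝ)..(l/2), (W'l x)^2*(Wl x)^2)
      = ∫ x in (-(l/2))..(0:ℝ), (w' x)^2*(w x)^2 := by
    have e : (∫ x in (0:ℝ)..(l/2), (W'l x)^2*(Wl x)^2)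
        = ∫ x in (0:ℝ)..(l/2), (fun y => (w' y)^2*(w y)^2) (-x) := by
      refine integral_congr fun x _ => ?_
      show (w' (-x))^2 * (-w (-x))^2 = (w' (-x))^2*(w (-x))^2
      ring
    rw [e, intervalIntegral.integral_comp_neg (fun y => (w' y)^2*(w y)^2), neg_zero]
  have T2 : (∫ x in (0:ℝ)..(l/2), (Wl x)^2/2) = ∫ x in (-(l/2))..(0:ℝ), (w x)^2/2 := by
    have e : (∫ x in (0:ℝ)..(l/2), (Wl x)^2/2)
        = ∫ x in (0:ℝ)..(l/2), (fun y => (w y)^2/2) (-x) := by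
      refine integral_congr fun x _ => ?_
      show (-w (-x))^2/2 = (w (-x))^2/2
      ring
    rw [e, intervalIntegral.integral_comp_neg (fun y => (w y)^2/2), neg_zero]
  -- bound of w on the interval
  have hwb : ∀ x ∈ Icc (-(l/2)) (l/2), |w x| ≤ l/2 := by
    intro x hx
    rcases le_or_gt 0 x with h | h
    · have hb := HR.2.2.2 x ⟨h, hx.2⟩
      rw [abs_of_nonneg hb.1]; linarith [hb.2, hx.2]
    · have hb := HL.2.2.2 (-x) ⟨by linarith, by linarith [hx.1]⟩
      have h1 : 0 ≤ -w x := by simpa [hWl] using hb.1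
      have h2' : -w x ≤ -x := by simpa [hWl] using hb.2
      rw [abs_of_nonpos (by linarith)]
      linarith [hx.1]
  -- integrability pieces
  have hwcont : ContinuousOn w (Icc (-(l/2)) (l/2)) := hlip.continuousOn
  have hw'ae : AEStronglyMeasurable w' (volume.restrict (Icc (-(l/2)) (l/2))) := by
    refine ((measurable_deriv w).aestronglyMeasurable).congr ?_
    filter_upwards [hderiv] with x hx
    exact (hx.1.deriv).symm ▸ rfl
  have hIint : ∀ p q : ℝ, -(l/2) ≤ p → p ≤ q → q ≤ l/2 →
      IntervalIntegrable (fun x => (w' x)^2*(w x)^2) volume p q := by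
    intro p q hp hpq hq
    rw [intervalIntegrable_iff_integrableOn_Ioc_of_le hpq]
    have hsub : Ioc p q ⊆ Icc (-(l/2)) (l/2) :=
      fun x hx => ⟨by linarith [hx.1], le_trans hx.2 hq⟩
    have hmono : volume.restrict (Ioc p q) ≤ volume.restrict (Icc (-(l/2)) (l/2)) :=
      Measure.restrict_mono hsub le_rfl
    refine Integrable.mono' ((integrableOn_const (C := (l/2)^2)
      (by simp [Real.volume_Ioc]))) ?_ ?_
    · exact ((continuous_pow 2).comp_aestronglyMeasurable (hw'ae.mono_measure hmono)).mul
        ((continuous_pow 2).comp_aestronglyMeasurable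
          ((hwcont.mono hsub).aestronglyMeasurable measurableSet_Ioc))
    · filter_upwards [hderiv.filter_mono (ae_mono hmono),
        (ae_restrict_mem measurableSet_Ioc)] with x hx hxm
      rw [Real.norm_eq_abs, abs_mul, abs_pow, abs_pow]
      have hb1 : |w' x| ≤ 1 := abs_le.2 ⟨by linarith [hx.2.1], hx.2.2⟩
      have hb2 := hwb x (hsub hxm)
      calc |w' x|^2*|w x|^2 ≤ 1^2 * (l/2)^2 := by
            refine mul_le_mul ?_ ?_ (by positivity) (by norm_num)
            · exact pow_le_pow_left₀ (abs_nonneg _) hb1 2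
            · exact pow_le_pow_left₀ (abs_nonneg _) hb2 2
        _ = (l/2)^2 := by norm_num
  have hw2int : ∀ p q : ℝ, -(l/2) ≤ p → p ≤ q → q ≤ l/2 →
      IntervalIntegrable (fun x => (w x)^2) volume p q := by
    intro p q hp hpq hq
    refine ((hwcont.mono ?_).pow 2).intervalIntegrable
    rw [uIcc_of_le hpq]
    exact Icc_subset_Icc hp hq
  -- splittings
  have hSsplit : (∫ x in (-(l/2))..(0:ℝ), (w' x)^2*(w x)^2)
      + (∫ x in (0:ℝ)..(l/2), (w' x)^2*(w x)^2)
      = ∫ x in (-(l/2))..(l/2), (w' x)^2*(w x)^2 :=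
    integral_add_adjacent_intervals (hIint _ _ le_rfl (by linarith) hm.le)
      (hIint _ _ (by linarith) hm.le le_rfl)
  have hw2split : (∫ x in (-(l/2))..(0:ℝ), (w x)^2) + (∫ x in (0:ℝ)..(l/2), (w x)^2)
      = ∫ x in (-(l/2))..(l/2), (w x)^2 :=
    integral_add_adjacent_intervals (hw2int _ _ le_rfl (by linarith) hm.le)
      (hw2int _ _ (by linarith) hm.le le_rfl)
  -- wA^2 integrals
  set IA : ℝ := ∫ x in (0:ℝ)..(l/2), uA (l/2) α x with hIAdef
  have huAc : Continuous (uA (l/2) α) := uA_continuous hm hα0 hα1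
  have ewA1 : (∫ x in (0:ℝ)..(l/2), (wA l α x)^2) = 2 * IA := by
    rw [hIAdef, ← intervalIntegral.integral_const_mul]
    refine integral_congr fun x hx => ?_
    rw [uIcc_of_le hm.le] at hx
    exact wA_sq hl hα0 hα1 hx.1 hx.2
  have ewA0 : (∫ x in (-(l/2))..(0:ℝ), (wA l α x)^2) = ∫ x in (0:ℝ)..(l/2), (wA l α x)^2 := by
    have e : (∫ x in (0:ℝ)..(l/2), (wA l α x)^2)
        = ∫ x in (0:ℝ)..(l/2), (fun y => (wA l α y)^2) (-x) := by
      refine integral_congr fun x _ => ?_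
      show (wA l α x)^2 = (wA l α (-x))^2
      rw [wA_odd ha2]
      ring
    rw [e, intervalIntegral.integral_comp_neg (fun y => (wA l α y)^2), neg_zero]
  have hwAintR : IntervalIntegrable (fun x => (wA l α x)^2) volume 0 (l/2) := by
    refine ContinuousOn.intervalIntegrable (ContinuousOn.congr
      (f := fun x => 2 * uA (l/2) α x) (continuous_const.mul huAc).continuousOn ?_)
    intro x hx
    rw [uIcc_of_le hm.le] at hx
    exact wA_sq hl hα0 hα1 hx.1 hx.2
  have hwAintL : IntervalIntegrable (fun x => (wA l α x)^2) volume (-(l/2)) 0 := by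
    refine ContinuousOn.intervalIntegrable (ContinuousOn.congr
      (f := fun x => 2 * uA (l/2) α (-x))
      ((continuous_const.mul (huAc.comp continuous_neg)).continuousOn) ?_)
    intro x hx
    rw [uIcc_of_le (by linarith : -(l/2) ≤ (0:ℝ))] at hx
    show (wA l α x)^2 = 2 * uA (l/2) α (-x)
    have : wA l α x = - wA l α (-x) := by
      rw [← wA_odd ha2 (-x), neg_neg]
    rw [this, neg_sq]
    exact wA_sq hl hα0 hα1 (by linarith [hx.2]) (by linarith [hx.1])
  have hwA2split : (∫ x in (-(l/2))..(0:ℝ), (wA l α x)^2) + (∫ x in (0:ℝ)..(l/2), (wA l α x)^2)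
      = ∫ x in (-(l/2))..(l/2), (wA l α x)^2 :=
    integral_add_adjacent_intervals hwAintL hwAintR
  have hcon : (∫ x in (-(l/2))..(0:ℝ), (w x)^2) + (∫ x in (0:ℝ)..(l/2), (w x)^2) = 4 * IA := by
    rw [hw2split, hL2, ← hwA2split, ewA0, ewA1]
    ring
  have key1 := HR.1
  have key2 := HL.1
  rw [T1, T2] at key2
  have hdiv1 : (∫ x in (0:ℝ)..(l/2), (w x)^2/2) = (∫ x in (0:ℝ)..(l/2), (w x)^2)/2 := by
    rw [intervalIntegral.integral_div]
  have hdiv2 : (∫ x in (-(l/2))..(0:ℝ), (w x)^2/2) = (∫ x in (-(l/2))..(0:ℝ), (w x)^2)/2 := by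
    rw [intervalIntegral.integral_div]
  rw [hdiv1] at key1
  rw [hdiv2] at key2
  set RR : ℝ := ∫ x in (0:ℝ)..(l/2), (w x*w' x - vv (l/2) α x)^2 with hRRdef
  set RL : ℝ := ∫ x in (0:ℝ)..(l/2), (Wl x*W'l x - vv (l/2) α x)^2 with hRLdef
  have hRpos : 0 < RR + RL := by
    rcases lt_or_ge 0 (RR + RL) with h | h
    · exact h
    have hR0 : RR = 0 := le_antisymm (by linarith [HL.2.1]) HR.2.1
    have hL0 : RL = 0 := le_antisymm (by linarith [HR.2.1]) HL.2.1
    exfalso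
    obtain ⟨x₀, hx₀, hne'⟩ := hne
    have hRnn := HR.2.2.1 hR0
    have hLnn := HL.2.2.1 hL0
    rcases le_or_gt 0 x₀ with h' | h'
    · have h1 := hRnn x₀ ⟨h', hx₀.2⟩
      have hsq := wA_sq hl hα0 hα1 h' hx₀.2
      have hww := HR.2.2.2 x₀ ⟨h', hx₀.2⟩
      have hwAnn := wA_nonneg hl hα0 h'
      apply hne'
      have heq2 : (w x₀)^2 = (wA l α x₀)^2 := by rw [h1, ← hsq]
      calc w x₀ = Real.sqrt ((w x₀)^2) := (Real.sqrt_sq hww.1).symm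
        _ = Real.sqrt ((wA l α x₀)^2) := by rw [heq2]
        _ = wA l α x₀ := Real.sqrt_sq hwAnn
    · have hmem : -x₀ ∈ Icc (0:ℝ) (l/2) := ⟨by linarith, by linarith [hx₀.1]⟩
      have h1 := hLnn (-x₀) hmem
      have hsq := wA_sq hl hα0 hα1 hmem.1 hmem.2
      have hww := HL.2.2.2 (-x₀) hmem
      have hwAnn := wA_nonneg hl hα0 hmem.1
      apply hne'
      have heq : Wl (-x₀) = wA l α (-x₀) := by
        have heq2 : (Wl (-x₀))^2 = (wA l α (-x₀))^2 := by rw [h1, ← hsq]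
        calc Wl (-x₀) = Real.sqrt ((Wl (-x₀))^2) := (Real.sqrt_sq hww.1).symm
          _ = Real.sqrt ((wA l α (-x₀))^2) := by rw [heq2]
          _ = wA l α (-x₀) := Real.sqrt_sq hwAnn
      have e1 : Wl (-x₀) = -w x₀ := by rw [hWl]; simp
      rw [e1, wA_odd ha2] at heq
      exact neg_injective heq
  have hcc : 2*cst α*((∫ x in (0:ℝ)..(l/2), (w x)^2)/2 - IA)
      + 2*cst α*((∫ x in (-(l/2))..(0:ℝ), (w x)^2)/2 - IA) = 0 := by
    linear_combination (cst α) * hcon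
  have hconstsum : (l/2)^3*α^4/3 + (l/2)^3*α^4/3 = l^3/12*α^4 := by ring
  rw [gt_iff_lt, ← hSsplit]
  linarith [key1, key2, hRpos, hcc, hconstsum]
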